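/- Let c ∈ ℂ with c ≠ 1 and 4b = -(1-c)² with c ≠ -1, and set M = [[1, b], [1, c]]. Then M has the unique eigenvalue (1+c)/2, this eigenvalue is nonzero, and M is not diagonalizable; consequently there exist g ∈ GL₂(ℂ) and q ≠ 0 such that q·g⁻¹·M·g = [[1,1],[0,1]]. -/

import Mathlib

theorem stmt_19 (b c : ℂ) (hc1 : c ≠ 1) (hcm1 : c ≠ -1) (hb : 4 * b = -(1 - c) ^ 2) :
    spectrum ℂ (!![1, b; 1, c] : Matrix (Fin 2) (Fin 2) ℂ) = {(1 + c) / 2} ∧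
    (1 + c) / 2 ≠ 0 ∧
    (¬ ∃ g : GL (Fin 2) ℂ, ∃ d : Fin 2 → ℂ,
      (↑g⁻¹ : Matrix (Fin 2) (Fin 2) ℂ) * !![1, b; 1, c] * (↑g : Matrix (Fin 2) (Fin 2) ℂ) = Matrix.diagonal d) ∧
    (∃ g : GL (Fin 2) ℂ, ∃ q : ℂ, q ≠ 0 ∧
      q • ((↑g⁻¹ : Matrix (Fin 2) (Fin 2) ℂ) * !![1, b; 1, c] * (↑g : Matrix (Fin 2) (Fin 2) ℂ)) = !![1, 1; 0, 1]) := by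
  have hc : (1 : ℂ) + c ≠ 0 := by
    intro h; apply hcm1; linear_combination h
  have hbe : b = -(1 - c) ^ 2 / 4 := by linear_combination hb / 4
  set M : Matrix (Fin 2) (Fin 2) ℂ := !![1, b; 1, c] with hM
  have detchar : ∀ x : ℂ, ((algebraMap ℂ (Matrix (Fin 2) (Fin 2) ℂ)) x - M).det
      = (x - (1 + c) / 2) ^ 2 := by
    intro x
    simp [hM, Matrix.det_fin_two, Matrix.algebraMap_matrix_apply]
    ring_nf
    linear_combination -hb / 4
  refine ⟨?_, ?_, ?_, ?_⟩
  · ext x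
    simp only [spectrum.mem_iff, Set.mem_singleton_iff]
    rw [Matrix.isUnit_iff_isUnit_det, detchar x]
    simp [isUnit_iff_ne_zero, pow_eq_zero_iff, sub_eq_zero]
  · intro h
    apply hc
    field_simp at h
    linear_combination h
  · rintro ⟨g, d, hgd⟩
    have hM' : M = (↑g : Matrix (Fin 2) (Fin 2) ℂ) * Matrix.diagonal d * (↑g⁻¹ : Matrix (Fin 2) (Fin 2) ℂ) := by
      rw [← hgd]
      have h1 : (↑g : Matrix (Fin 2) (Fin 2) ℂ) * (↑g⁻¹ : Matrix (Fin 2) (Fin 2) ℂ) = 1 := g.mul_inv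
      have h2 : (↑g⁻¹ : Matrix (Fin 2) (Fin 2) ℂ) * (↑g : Matrix (Fin 2) (Fin 2) ℂ) = 1 := g.inv_mul
      calc M = ((↑g : Matrix (Fin 2) (Fin 2) ℂ) * (↑g⁻¹ : Matrix (Fin 2) (Fin 2) ℂ)) * M *
            ((↑g : Matrix (Fin 2) (Fin 2) ℂ) * (↑g⁻¹ : Matrix (Fin 2) (Fin 2) ℂ)) := by rw [h1]; simp
        _ = _ := by noncomm_ring
    have key : ∀ i : Fin 2, d i = (1 + c) / 2 := by
      intro i
      have h0 : ((algebraMap ℂ (Matrix (Fin 2) (Fin 2) ℂ)) (d i) - M).det = 0 := by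
        rw [hM']
        have : (algebraMap ℂ (Matrix (Fin 2) (Fin 2) ℂ)) (d i) - (↑g : Matrix (Fin 2) (Fin 2) ℂ) * Matrix.diagonal d * (↑g⁻¹ : Matrix (Fin 2) (Fin 2) ℂ)
            = (↑g : Matrix (Fin 2) (Fin 2) ℂ) * ((algebraMap ℂ (Matrix (Fin 2) (Fin 2) ℂ)) (d i) - Matrix.diagonal d) * (↑g⁻¹ : Matrix (Fin 2) (Fin 2) ℂ) := by
          have h1 : (↑g : Matrix (Fin 2) (Fin 2) ℂ) * (↑g⁻¹ : Matrix (Fin 2) (Fin 2) ℂ) = 1 := g.mul_inv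
          rw [mul_sub, sub_mul]
          congr 1
          rw [(Algebra.commutes (d i) (↑g : Matrix (Fin 2) (Fin 2) ℂ)).symm, mul_assoc, h1, mul_one]
        rw [this, Matrix.det_mul, Matrix.det_mul]
        have : ((algebraMap ℂ (Matrix (Fin 2) (Fin 2) ℂ)) (d i) - Matrix.diagonal d).det = 0 := by
          have : (algebraMap ℂ (Matrix (Fin 2) (Fin 2) ℂ)) (d i) - Matrix.diagonal d
              = Matrix.diagonal (fun j => d i - d j) := by
            rw [Matrix.algebraMap_eq_diagonal]
            rw [← Matrix.diagonal_sub]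
            rfl
          rw [this, Matrix.det_diagonal]
          apply Finset.prod_eq_zero (Finset.mem_univ i)
          simp
        rw [this]; ring
      rw [detchar] at h0
      have := pow_eq_zero_iff (n := 2) (by norm_num) |>.mp h0
      linear_combination this
    have : Matrix.diagonal d = ((1 + c) / 2 : ℂ) • (1 : Matrix (Fin 2) (Fin 2) ℂ) := by
      funext i j
      rcases eq_or_ne i j with rfl | hij
      · simp [key i]
      · simp [Matrix.diagonal_apply_ne _ hij, Matrix.one_apply_ne hij, hij]
    rw [this] at hM'
    have : M = ((1 + c) / 2 : ℂ) • (1 : Matrix (Fin 2) (Fin 2) ℂ) := by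
      rw [hM']
      rw [Matrix.mul_smul, Matrix.smul_mul, mul_one, g.mul_inv]
    have := congrFun (congrFun this 1) 0
    simp [hM] at this
  · have hAB : (!![(1-c)/2, (1+c)/2; 1, 0] : Matrix (Fin 2) (Fin 2) ℂ) *
        !![0, 1; 2/(1+c), -(1-c)/(1+c)] = 1 := by
      ext i j
      fin_cases i <;> fin_cases j <;>
        simp [Matrix.mul_apply, Fin.sum_univ_two] <;> field_simp <;> (first | exact Or.inr trivial | ring)
    have hBA : (!![0, 1; 2/(1+c), -(1-c)/(1+c)] : Matrix (Fin 2) (Fin 2) ℂ) *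
        !![(1-c)/2, (1+c)/2; 1, 0] = 1 := by
      ext i j
      fin_cases i <;> fin_cases j <;>
        simp [Matrix.mul_apply, Fin.sum_univ_two] <;> field_simp <;> (first | exact Or.inr trivial | exact hc | ring)
    refine ⟨⟨!![(1-c)/2, (1+c)/2; 1, 0], !![0, 1; 2/(1+c), -(1-c)/(1+c)], hAB, hBA⟩,
      2/(1+c), by simpa using hc, ?_⟩
    show (2/(1+c) : ℂ) • ((!![0, 1; 2/(1+c), -(1-c)/(1+c)] : Matrix (Fin 2) (Fin 2) ℂ) * M *
      !![(1-c)/2, (1+c)/2; 1, 0]) = !![1, 1; 0, 1]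
    subst hbe
    ext i j
    fin_cases i <;> fin_cases j
    · simp [hM, Matrix.mul_apply, Fin.sum_univ_two]; field_simp; ring
    · simp [hM, Matrix.mul_apply, Fin.sum_univ_two]; field_simp; exact hc
    · simp [hM, Matrix.mul_apply, Fin.sum_univ_two]; field_simp
      exact Or.inr (by ring)
    · simp [hM, Matrix.mul_apply, Fin.sum_univ_two]; field_simp; ring
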